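/- Let ℋ be a complex Hilbert space. For each h ∈ (0,1] let P(h) : ℋ → ℋ be a bounded operator and let π₊(h), π₋(h) be orthogonal projections on ℋ. Assume there exist M > 0 and functions a, b : (0,1] → [0,∞) with a(h)/h → 0 and b(h)/h → 0 as h → 0, such that for all h: ‖P(h)* π₋(h)‖ ≤ M h, ‖P(h) π₊(h)‖ ≤ M h, ‖π₋(h) P(h) (1 − π₊(h))‖ ≤ a(h), ‖π₊(h) P(h)* (1 − π₋(h))‖ ≤ b(h), and for all u ∈ ℋ: ‖P(h)(1 − π₊(h))u‖ ≥ h‖(1 − π₊(h))u‖ and ‖P(h)*(1 − π₋(h))u‖ ≥ h‖(1 − π₋(h))u‖. Then there exist h₀ > 0 and C > 0 such that for all 0 < h < h₀ the Grushin problem 𝒫(h) : ℋ × range π₋(h) → ℋ × range π₊(h), 𝒫(h)(u, u₋) = (P(h) u + u₋, π₊(h) u), is bijective, and whenever 𝒫(h)(u, u₋) = (v, v₊) one has h‖u‖ + ‖u₋‖ ≤ C(‖v‖ + h‖v₊‖). -/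

import Mathlib

local notation "⟪" x ", " y "⟫" => @inner ℂ _ _ x y

private lemma proj_norm_le {ℋ : Type*} [NormedAddCommGroup ℋ] [InnerProductSpace ℂ ℋ]
    [CompleteSpace ℋ] {π : ℋ →L[ℂ] ℋ} (hidem : IsIdempotentElem π) (hsa : IsSelfAdjoint π)
    (u : ℋ) : ‖π u‖ ≤ ‖u‖ := by
  rcases eq_or_lt_of_le (norm_nonneg (π u)) with hz | hz
  · rw [← hz]; exact norm_nonneg u
  have e := ContinuousLinearMap.adjoint_inner_left π u (π u)
  rw [hsa.adjoint_eq, ← ContinuousLinearMap.mul_apply, hidem] at e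
  have h2 : ‖π u‖ ^ 2 = ‖⟪π u, u⟫‖ := by
    rw [e, inner_self_eq_norm_sq_to_K]
    simp [pow_two_nonneg]
  have h3 := norm_inner_le_norm (𝕜 := ℂ) (π u) u
  nlinarith [norm_nonneg u]

private lemma proj_norm_le' {ℋ : Type*} [NormedAddCommGroup ℋ] [InnerProductSpace ℂ ℋ]
    [CompleteSpace ℋ] {π : ℋ →L[ℂ] ℋ} (hidem : IsIdempotentElem π) (hsa : IsSelfAdjoint π)
    (u : ℋ) : ‖u - π u‖ ≤ ‖u‖ := by
  have := proj_norm_le (hidem.one_sub) ((IsSelfAdjoint.one (R := ℋ →L[ℂ] ℋ)).sub hsa) u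
  simpa using this

private lemma sa_inner_move {ℋ : Type*} [NormedAddCommGroup ℋ] [InnerProductSpace ℂ ℋ]
    [CompleteSpace ℋ] {π : ℋ →L[ℂ] ℋ} (hsa : IsSelfAdjoint π) (x y : ℋ) :
    ⟪π x, y⟫ = ⟪x, π y⟫ := by
  conv_lhs => rw [← hsa.adjoint_eq]
  exact ContinuousLinearMap.adjoint_inner_left π y x

set_option maxHeartbeats 1000000 in
theorem stmt_17
    {ℋ : Type*} [NormedAddCommGroup ℋ] [InnerProductSpace ℂ ℋ] [CompleteSpace ℋ]
    (P πp πm : ℝ → ℋ →L[ℂ] ℋ)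
    (hπp : ∀ h ∈ Set.Ioc (0 : ℝ) 1, IsIdempotentElem (πp h) ∧ IsSelfAdjoint (πp h))
    (hπm : ∀ h ∈ Set.Ioc (0 : ℝ) 1, IsIdempotentElem (πm h) ∧ IsSelfAdjoint (πm h))
    (M : ℝ) (hM : 0 < M)
    (a b : ℝ → ℝ) (ha0 : ∀ h, 0 ≤ a h) (hb0 : ∀ h, 0 ≤ b h)
    (ha : Filter.Tendsto (fun h => a h / h) (nhdsWithin 0 (Set.Ioi 0)) (nhds 0))
    (hb : Filter.Tendsto (fun h => b h / h) (nhdsWithin 0 (Set.Ioi 0)) (nhds 0))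
    (h1 : ∀ h ∈ Set.Ioc (0 : ℝ) 1,
      ‖(ContinuousLinearMap.adjoint (P h)).comp (πm h)‖ ≤ M * h)
    (h2 : ∀ h ∈ Set.Ioc (0 : ℝ) 1, ‖(P h).comp (πp h)‖ ≤ M * h)
    (h3 : ∀ h ∈ Set.Ioc (0 : ℝ) 1,
      ‖(πm h).comp ((P h).comp (ContinuousLinearMap.id ℂ ℋ - πp h))‖ ≤ a h)
    (h4 : ∀ h ∈ Set.Ioc (0 : ℝ) 1,
      ‖(πp h).comp ((ContinuousLinearMap.adjoint (P h)).comp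
        (ContinuousLinearMap.id ℂ ℋ - πm h))‖ ≤ b h)
    (h5 : ∀ h ∈ Set.Ioc (0 : ℝ) 1, ∀ u : ℋ,
      h * ‖u - πp h u‖ ≤ ‖P h (u - πp h u)‖)
    (h6 : ∀ h ∈ Set.Ioc (0 : ℝ) 1, ∀ u : ℋ,
      h * ‖u - πm h u‖ ≤ ‖ContinuousLinearMap.adjoint (P h) (u - πm h u)‖) :
    ∃ h₀ > (0 : ℝ), ∃ C > (0 : ℝ), ∀ h ∈ Set.Ioc (0 : ℝ) 1, h < h₀ →
      Function.Bijective (fun p : ℋ × ↥(LinearMap.range (πm h : ℋ →ₗ[ℂ] ℋ)) =>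
        ((P h p.1 + (p.2 : ℋ),
          ⟨πp h p.1, LinearMap.mem_range.mpr ⟨p.1, rfl⟩⟩) :
          ℋ × ↥(LinearMap.range (πp h : ℋ →ₗ[ℂ] ℋ)))) ∧
      ∀ (u : ℋ) (um : ↥(LinearMap.range (πm h : ℋ →ₗ[ℂ] ℋ))),
        h * ‖u‖ + ‖(um : ℋ)‖ ≤ C * (‖P h u + (um : ℋ)‖ + h * ‖πp h u‖) := by
  -- extract smallness thresholds
  have haev : {h : ℝ | a h / h < 1/2} ∈ nhdsWithin 0 (Set.Ioi 0) :=
    ha (Iio_mem_nhds (by norm_num : (0:ℝ) < 1/2))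
  have hbev : {h : ℝ | b h / h < 1/2} ∈ nhdsWithin 0 (Set.Ioi 0) :=
    hb (Iio_mem_nhds (by norm_num : (0:ℝ) < 1/2))
  obtain ⟨εa, hεa, hA⟩ := Metric.mem_nhdsWithin_iff.mp haev
  obtain ⟨εb, hεb, hB⟩ := Metric.mem_nhdsWithin_iff.mp hbev
  refine ⟨min εa εb, lt_min hεa hεb, 4*M+4, by linarith, ?_⟩
  intro h hIoc hlt
  obtain ⟨hpos, hle1⟩ := hIoc
  have hIoc : h ∈ Set.Ioc (0:ℝ) 1 := ⟨hpos, hle1⟩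
  have hball : ∀ {ε : ℝ}, h < ε → h ∈ Metric.ball (0:ℝ) ε ∩ Set.Ioi 0 := by
    intro ε hε
    exact ⟨by simpa [Real.dist_eq, abs_of_pos hpos] using hε, hpos⟩
  have haa : a h ≤ h/2 := by
    have := hA (hball (hlt.trans_le (min_le_left _ _)))
    have := (div_lt_iff₀ hpos).mp this
    linarith
  have hbb : b h ≤ h/2 := by
    have := hB (hball (hlt.trans_le (min_le_right _ _)))
    have := (div_lt_iff₀ hpos).mp this
    linarith
  obtain ⟨hpI, hpS⟩ := hπp h hIoc
  obtain ⟨hmI, hmS⟩ := hπm h hIoc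
  have hpp : ∀ x, πp h (πp h x) = πp h x := fun x => by
    rw [← ContinuousLinearMap.mul_apply, hpI]
  have hmm : ∀ x, πm h (πm h x) = πm h x := fun x => by
    rw [← ContinuousLinearMap.mul_apply, hmI]
  have hmn' := proj_norm_le' hmI hmS
  -- pointwise operator bounds
  have B2 : ∀ x, ‖P h (πp h x)‖ ≤ M*h*‖x‖ := fun x =>
    (((P h).comp (πp h)).le_opNorm x).trans
      (mul_le_mul_of_nonneg_right (h2 h hIoc) (norm_nonneg x))
  have B3 : ∀ x, ‖πm h (P h (x - πp h x))‖ ≤ a h * ‖x‖ := fun x =>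
    (((πm h).comp ((P h).comp (ContinuousLinearMap.id ℂ ℋ - πp h))).le_opNorm x).trans
      (mul_le_mul_of_nonneg_right (h3 h hIoc) (norm_nonneg x))
  have B4 : ∀ x, ‖πp h (ContinuousLinearMap.adjoint (P h) (x - πm h x))‖ ≤ b h * ‖x‖ := fun x =>
    (((πp h).comp ((ContinuousLinearMap.adjoint (P h)).comp
        (ContinuousLinearMap.id ℂ ℋ - πm h))).le_opNorm x).trans
      (mul_le_mul_of_nonneg_right (h4 h hIoc) (norm_nonneg x))
  -- the key a priori estimate
  have key : ∀ (u um : ℋ), πm h um = um →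
      h * ‖u‖ + ‖um‖ ≤ (4*M+4) * (‖P h u + um‖ + h * ‖πp h u‖) := by
    intro u um hum
    set v := P h u + um with hv
    set vp := πp h u with hvp
    have e1 : h * ‖u - vp‖ ≤ ‖P h (u - vp)‖ := h5 h hIoc u
    have e2 : ‖πm h (P h (u - vp))‖ ≤ a h * ‖u‖ := B3 u
    have e3 : ‖P h vp‖ ≤ M*h*‖vp‖ := by
      have := B2 vp
      rwa [show πp h vp = vp from hpp u] at this
    have e4 : P h (u - vp) - πm h (P h (u - vp)) = (v - P h vp) - πm h (v - P h vp) := by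
      have hPu : P h u = v - um := by rw [hv]; abel
      simp only [map_sub, hPu, hum]; abel
    have e5 : ‖(v - P h vp) - πm h (v - P h vp)‖ ≤ ‖v‖ + M*h*‖vp‖ := by
      calc ‖(v - P h vp) - πm h (v - P h vp)‖ ≤ ‖v - P h vp‖ := hmn' _
        _ ≤ ‖v‖ + ‖P h vp‖ := norm_sub_le _ _
        _ ≤ ‖v‖ + M*h*‖vp‖ := by linarith
    have e6 : ‖P h (u - vp)‖ ≤ ‖v‖ + M*h*‖vp‖ + a h * ‖u‖ := by
      have hsplit : P h (u - vp) =
          (P h (u - vp) - πm h (P h (u - vp))) + πm h (P h (u - vp)) := by abel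
      calc ‖P h (u - vp)‖
          = ‖(P h (u - vp) - πm h (P h (u - vp))) + πm h (P h (u - vp))‖ := by
            rw [sub_add_cancel]
        _ ≤ ‖P h (u - vp) - πm h (P h (u - vp))‖ + ‖πm h (P h (u - vp))‖ := norm_add_le _ _
        _ ≤ (‖v‖ + M*h*‖vp‖) + a h * ‖u‖ := by rw [e4]; exact add_le_add e5 e2
    have e7 : ‖u‖ ≤ ‖u - vp‖ + ‖vp‖ := by
      have := norm_add_le (u - vp) vp
      simpa using this
    have e8 : um = πm h v - πm h (P h vp) - πm h (P h (u - vp)) := by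
      have hPu : P h u = P h vp + P h (u - vp) := by rw [map_sub]; abel
      calc um = πm h um := hum.symm
        _ = πm h (v - P h u) := by rw [hv]; congr 1; abel
        _ = πm h v - πm h (P h vp) - πm h (P h (u - vp)) := by
            rw [hPu]; simp only [map_sub, map_add]; abel
    have e9 : ‖um‖ ≤ ‖v‖ + M*h*‖vp‖ + a h * ‖u‖ := by
      rw [e8]
      have t1 : ‖πm h v‖ ≤ ‖v‖ := proj_norm_le hmI hmS v
      have t2 : ‖πm h (P h vp)‖ ≤ M*h*‖vp‖ := (proj_norm_le hmI hmS _).trans e3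
      calc ‖πm h v - πm h (P h vp) - πm h (P h (u - vp))‖
          ≤ ‖πm h v - πm h (P h vp)‖ + ‖πm h (P h (u - vp))‖ := norm_sub_le _ _
        _ ≤ (‖πm h v‖ + ‖πm h (P h vp)‖) + ‖πm h (P h (u - vp))‖ :=
            add_le_add_left (norm_sub_le _ _) _
        _ ≤ ‖v‖ + M*h*‖vp‖ + a h * ‖u‖ := by linarith [e2]
    nlinarith [mul_le_mul_of_nonneg_right haa (norm_nonneg u),
      mul_le_mul_of_nonneg_left e7 (by linarith : (0:ℝ) ≤ h/2),
      mul_le_mul_of_nonneg_left e7 hpos.le,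
      mul_nonneg hM.le (norm_nonneg v),
      mul_nonneg hpos.le (norm_nonneg vp),
      mul_nonneg (mul_nonneg hM.le hpos.le) (norm_nonneg vp),
      norm_nonneg v, norm_nonneg (u - vp), norm_nonneg vp, norm_nonneg u]
  have hrg : ∀ x : ↥(LinearMap.range (πm h : ℋ →ₗ[ℂ] ℋ)), πm h (x : ℋ) = (x : ℋ) := by
    rintro ⟨x, c, hc⟩
    simp only [← hc, ContinuousLinearMap.coe_coe, hmm]
  refine ⟨⟨?_, ?_⟩, fun u um => key u um (hrg um)⟩
  · -- injective
    intro p q hpq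
    have h1' : P h p.1 + (p.2:ℋ) = P h q.1 + (q.2:ℋ) := congrArg Prod.fst hpq
    have h2' : πp h p.1 = πp h q.1 := by
      have := congrArg Prod.snd hpq
      exact Subtype.ext_iff.mp this
    have hk := key (p.1 - q.1) ((p.2:ℋ) - (q.2:ℋ))
      (by rw [map_sub, hrg p.2, hrg q.2])
    have hz1 : P h (p.1-q.1) + ((p.2:ℋ) - (q.2:ℋ)) = 0 := by
      rw [map_sub]
      rw [show P h p.1 - P h q.1 + ((p.2:ℋ) - (q.2:ℋ))
        = (P h p.1 + (p.2:ℋ)) - (P h q.1 + (q.2:ℋ)) from by abel, h1', sub_self]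
    have hz2 : πp h (p.1-q.1) = 0 := by rw [map_sub, h2', sub_self]
    rw [hz1, hz2] at hk
    simp only [norm_zero, mul_zero, add_zero] at hk
    have hn1 : ‖p.1 - q.1‖ = 0 := by
      nlinarith [norm_nonneg (p.1-q.1), norm_nonneg ((p.2:ℋ)-(q.2:ℋ))]
    have hn2 : ‖(p.2:ℋ) - (q.2:ℋ)‖ = 0 := by
      nlinarith [norm_nonneg (p.1-q.1), norm_nonneg ((p.2:ℋ)-(q.2:ℋ))]
    have hq1 : p.1 = q.1 := sub_eq_zero.mp (norm_eq_zero.mp hn1)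
    have hq2 : p.2 = q.2 := Subtype.ext (sub_eq_zero.mp (norm_eq_zero.mp hn2))
    exact Prod.ext hq1 hq2
  · -- surjective
    rintro ⟨v, vp⟩
    obtain ⟨c, hc⟩ := vp.2
    have hvp : πp h (vp:ℋ) = (vp:ℋ) := by rw [← hc, ContinuousLinearMap.coe_coe, hpp]
    set K := LinearMap.ker (πp h : ℋ →ₗ[ℂ] ℋ) with hK
    haveI : CompleteSpace K := (ContinuousLinearMap.isClosed_ker (πp h)).completeSpace_coe
    set S : K →L[ℂ] ℋ :=
      ((ContinuousLinearMap.id ℂ ℋ - πm h).comp (P h)).comp K.subtypeL with hS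
    have hSapp : ∀ x : K, S x = P h (x:ℋ) - πm h (P h (x:ℋ)) := fun x => rfl
    have hSlow : ∀ x : K, h/2 * ‖(x:ℋ)‖ ≤ ‖S x‖ := by
      intro x
      have hx : πp h (x:ℋ) = 0 := x.2
      have e1 : h * ‖(x:ℋ)‖ ≤ ‖P h (x:ℋ)‖ := by
        have := h5 h hIoc (x:ℋ); rwa [hx, sub_zero] at this
      have e2 : ‖πm h (P h (x:ℋ))‖ ≤ a h * ‖(x:ℋ)‖ := by
        have := B3 (x:ℋ); rwa [hx, sub_zero] at this
      have e3 : ‖P h (x:ℋ)‖ - ‖πm h (P h (x:ℋ))‖ ≤ ‖S x‖ := by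
        rw [hSapp]; exact norm_sub_norm_le _ _
      have e4 := mul_le_mul_of_nonneg_right haa (norm_nonneg (x:ℋ))
      linarith
    have hanti : AntilipschitzWith ⟨2/h, (div_pos two_pos hpos).le⟩ S := by
      apply S.antilipschitz_of_bound
      intro x
      show ‖(x:ℋ)‖ ≤ 2/h * ‖S x‖
      have := hSlow x
      calc ‖(x:ℋ)‖ = 2/h*(h/2*‖(x:ℋ)‖) := by field_simp
        _ ≤ 2/h*‖S x‖ :=
          mul_le_mul_of_nonneg_left this (div_pos two_pos hpos).le
    have hclosed : IsClosed (Set.range S) := hanti.isClosed_range S.uniformContinuous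
    set R : Submodule ℂ ℋ := LinearMap.range (S : K →ₗ[ℂ] ℋ) with hR
    have hRclosed : IsClosed (R : Set ℋ) := by
      have : (R : Set ℋ) = Set.range S := by
        ext t; simp [hR, LinearMap.mem_range, Set.mem_range]
      rw [this]; exact hclosed
    haveI : CompleteSpace R := hRclosed.completeSpace_coe
    set w := (v - P h (vp:ℋ)) - πm h (v - P h (vp:ℋ)) with hw
    obtain ⟨y, hyR, z, hzR, hwyz⟩ := R.exists_add_mem_mem_orthogonal w
    have hmy : πm h y = 0 := by
      obtain ⟨x, hx⟩ := hyR
      rw [← hx, ContinuousLinearMap.coe_coe, hSapp, map_sub, hmm, sub_self]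
    have hmw : πm h w = 0 := by rw [hw, map_sub, hmm, sub_self]
    have hmz : πm h z = 0 := by
      have hzwy : z = w - y := by rw [hwyz]; abel
      rw [hzwy, map_sub, hmw, hmy, sub_zero]
    have hz0 : z = 0 := by
      have hortho : ∀ x : K, ⟪(S x : ℋ), z⟫ = 0 := fun x =>
        (Submodule.mem_orthogonal R z).mp hzR (S x) ⟨x, rfl⟩
      have hPz : ContinuousLinearMap.adjoint (P h) z
          = πp h (ContinuousLinearMap.adjoint (P h) z) := by
        apply ext_inner_left ℂ
        intro t
        have hxt : πp h (t - πp h t) = 0 := by rw [map_sub, hpp, sub_self]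
        have ho := hortho ⟨t - πp h t, hxt⟩
        rw [hSapp, inner_sub_left] at ho
        have hπz : ⟪πm h (P h (t - πp h t)), z⟫ = 0 := by
          rw [sa_inner_move hmS, hmz, inner_zero_right]
        have h1t : ⟪P h (t - πp h t), z⟫ = 0 := by rw [← ho, hπz, sub_zero]
        rw [map_sub, inner_sub_left, sub_eq_zero] at h1t
        calc ⟪t, ContinuousLinearMap.adjoint (P h) z⟫
            = ⟪P h t, z⟫ := ContinuousLinearMap.adjoint_inner_right (P h) t z
          _ = ⟪P h (πp h t), z⟫ := h1t
          _ = ⟪πp h t, ContinuousLinearMap.adjoint (P h) z⟫ :=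
              (ContinuousLinearMap.adjoint_inner_right (P h) (πp h t) z).symm
          _ = ⟪t, πp h (ContinuousLinearMap.adjoint (P h) z)⟫ := sa_inner_move hpS _ _
      have hb1 : ‖ContinuousLinearMap.adjoint (P h) z‖ ≤ b h * ‖z‖ := by
        have := B4 z
        rw [hmz, sub_zero] at this
        rw [hPz]; exact this
      have hb2 : h * ‖z‖ ≤ ‖ContinuousLinearMap.adjoint (P h) z‖ := by
        have := h6 h hIoc z; rwa [hmz, sub_zero] at this
      have hbn := mul_le_mul_of_nonneg_right hbb (norm_nonneg z)
      have : ‖z‖ ≤ 0 := by nlinarith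
      exact norm_le_zero_iff.mp this
    have hwR : w ∈ R := by rw [hwyz, hz0, add_zero]; exact hyR
    obtain ⟨x, hx⟩ := hwR
    set u := (vp:ℋ) + (x:ℋ) with hu
    refine ⟨⟨u, ⟨πm h (v - P h u), LinearMap.mem_range.mpr ⟨_, rfl⟩⟩⟩, ?_⟩
    have hxw : P h (x:ℋ) - πm h (P h (x:ℋ))
        = (v - P h (vp:ℋ)) - πm h (v - P h (vp:ℋ)) := by
      rw [← hSapp, ← ContinuousLinearMap.coe_coe, hx, hw]
    have hfst : P h u + πm h (v - P h u) = v := by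
      calc P h u + πm h (v - P h u)
          = (P h (x:ℋ) - πm h (P h (x:ℋ)))
            + (P h (vp:ℋ) - πm h (P h (vp:ℋ))) + πm h v := by
            simp only [hu, map_add, map_sub]; abel
        _ = ((v - P h (vp:ℋ)) - πm h (v - P h (vp:ℋ)))
            + (P h (vp:ℋ) - πm h (P h (vp:ℋ))) + πm h v := by rw [hxw]
        _ = v := by simp only [map_sub]; abel
    have hsnd : πp h u = (vp:ℋ) := by
      rw [hu, map_add, hvp, show πp h (x:ℋ) = 0 from x.2, add_zero]
    exact Prod.ext hfst (Subtype.ext hsnd)
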